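/- arXiv:2012.03073 — 5 statements merged into one kernel-verified Lean document; each statement's English description precedes it below -/
import Mathlib

section
/- Let f, g : X → Y be morphisms of schemes and let i : E(f,g) → X be their equalizer. Then the underlying map of topological spaces of i is injective, and its image is exactly the set of points x ∈ X such that f(x) = g(x) (call this common value y) and the two field homomorphisms κ(y) → κ(x) induced by f and by g agree. -/
open AlgebraicGeometry CategoryTheory CategoryTheory.Limits

/-- The underlying map of the equalizer `i : E(f,g) ⟶ X` of two scheme
morphisms `f, g : X ⟶ Y` is injective, and its image is exactly the set of
points `x ∈ X` at which `f` and `g` take the same value `y` and induce the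
same field homomorphism `κ(y) → κ(x)` on residue fields. -/
theorem equalizer_injective_and_range {X Y : Scheme} (f g : X ⟶ Y) :
    Function.Injective (equalizer.ι f g).base ∧
      Set.range (equalizer.ι f g).base =
        {x : X | ∃ h : f.base x = g.base x,
          f.residueFieldMap x =
            (Y.residueFieldCongr h).hom ≫ g.residueFieldMap x} := by
  constructor
  · exact (equalizer.ι f g).injective
  · ext x
    simp only [Set.mem_range, Set.mem_setOf_eq]
    constructor
    · rintro ⟨e, rfl⟩
      have h : f.base ((equalizer.ι f g).base e) = g.base ((equalizer.ι f g).base e) := by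
        show (equalizer.ι f g ≫ f).base e = (equalizer.ι f g ≫ g).base e; rw [equalizer.condition]
      refine ⟨h, ?_⟩
      have h1 := Scheme.Hom.residueFieldMap_congr (equalizer.condition f g) e
      rw [Scheme.residueFieldMap_comp, Scheme.residueFieldMap_comp] at h1
      haveI : Mono ((equalizer.ι f g).residueFieldMap e) := by
        apply ConcreteCategory.mono_of_injective
        exact RingHom.injective
          (show X.residueField _ →+* (equalizer f g).residueField e from
            ((equalizer.ι f g).residueFieldMap e).hom)
      rw [← cancel_mono ((equalizer.ι f g).residueFieldMap e)]
      simpa using h1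
    · rintro ⟨h, hres⟩
      have key : X.fromSpecResidueField x ≫ f = X.fromSpecResidueField x ≫ g := by
        rw [← Scheme.Hom.SpecMap_residueFieldMap_fromSpecResidueField,
            ← Scheme.Hom.SpecMap_residueFieldMap_fromSpecResidueField,
            hres, Spec.map_comp, Category.assoc,
            Scheme.residueFieldCongr_fromSpecResidueField]
      refine ⟨(equalizer.lift (X.fromSpecResidueField x) key).base
        (IsLocalRing.closedPoint _), ?_⟩
      show (equalizer.lift (X.fromSpecResidueField x) key ≫ equalizer.ι f g).base (IsLocalRing.closedPoint _) = x; rw [equalizer.lift_ι]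
      exact Scheme.fromSpecResidueField_apply x _
end

section
/- Let S be a scheme, X an S-scheme with structure morphism ρ : X → S, and let f, g : S → X be S-valued points of X, i.e., morphisms with ρ ∘ f = id_S and ρ ∘ g = id_S. Then the underlying map of the equalizer i : E(f,g) → S is injective, and its image is exactly the set {s ∈ S : f(s) = g(s)} of points of S at which the underlying maps of f and g agree. -/
open AlgebraicGeometry CategoryTheory CategoryTheory.Limits

lemma residueFieldMap_congr_right {X Y : Scheme} (f : X ⟶ Y) {x y : X} (e : x = y) :
    f.residueFieldMap x ≫ (X.residueFieldCongr e).hom =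
      (Y.residueFieldCongr (by rw [e])).hom ≫ f.residueFieldMap y := by
  subst e; simp

/-- For two `S`-valued points `f, g : S ⟶ X` of an `S`-scheme `X` (sections of
the structure morphism `ρ : X ⟶ S`), the underlying map of the equalizer
`E(f,g) ⟶ S` is injective with image the set of points where `f` and `g`
agree. -/
theorem equalizer_section_injective_and_range {S X : Scheme} (ρ : X ⟶ S)
    (f g : S ⟶ X) (hf : f ≫ ρ = 𝟙 S) (hg : g ≫ ρ = 𝟙 S) :
    Function.Injective (equalizer.ι f g).base ∧
      Set.range (equalizer.ι f g).base = {s : S | f.base s = g.base s} := by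
  refine ⟨Scheme.Hom.injective _, ?_⟩
  ext s
  simp only [Set.mem_range, Set.mem_setOf_eq]
  constructor
  · rintro ⟨e, rfl⟩
    have h := congrArg (fun m : Scheme.Hom _ _ => m.base e) (equalizer.condition f g)
    simpa using h
  · intro hs
    -- `hs : f.base s = g.base s`
    have e1 : ρ.base (f.base s) = s := by
      have := congrArg (fun m : Scheme.Hom _ _ => m.base s) hf
      simpa using this
    -- residue field maps at `s` induced by `f` and `g` agree
    have key : f.residueFieldMap s =
        (X.residueFieldCongr hs).hom ≫ g.residueFieldMap s := by
      set u : S.residueField s ⟶ X.residueField (f.base s) :=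
        (S.residueFieldCongr e1.symm).hom ≫ ρ.residueFieldMap (f.base s) with hu
      have hA : u ≫ f.residueFieldMap s = 𝟙 _ := by
        rw [hu, Category.assoc, ← Scheme.residueFieldMap_comp,
          Scheme.Hom.residueFieldMap_congr hf]
        simp
        simp [Scheme.residueFieldCongr]
      have hB : u ≫ (X.residueFieldCongr hs).hom ≫ g.residueFieldMap s = 𝟙 _ := by
        rw [hu]
        slice_lhs 2 3 => rw [residueFieldMap_congr_right ρ hs]
        slice_lhs 3 4 => rw [← Scheme.residueFieldMap_comp]
        rw [Scheme.Hom.residueFieldMap_congr hg]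
        simp
        simp [Scheme.residueFieldCongr]
      have hinj : Function.Injective (f.residueFieldMap s) := RingHom.injective _
      have happ : ∀ y, f.residueFieldMap s (u y) = y := fun y => by
        have := congrArg (fun m => m y) hA
        simpa using this
      have happ' : ∀ y,
          ((X.residueFieldCongr hs).hom ≫ g.residueFieldMap s) (u y) = y := fun y => by
        have := congrArg (fun m => m y) hB
        simpa using this
      have hux : ∀ x, u (f.residueFieldMap s x) = x :=
        fun x => hinj (happ (f.residueFieldMap s x))
      ext x
      exact ((happ' (f.residueFieldMap s x)).symm.trans
        (congrArg (fun z => ((X.residueFieldCongr hs).hom ≫ g.residueFieldMap s) z) (hux x)))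
    have keyS : S.fromSpecResidueField s ≫ f = S.fromSpecResidueField s ≫ g := by
      rw [← Scheme.Hom.SpecMap_residueFieldMap_fromSpecResidueField f s,
        ← Scheme.Hom.SpecMap_residueFieldMap_fromSpecResidueField g s,
        key, Spec.map_comp, Category.assoc,
        Scheme.residueFieldCongr_fromSpecResidueField]
    refine ⟨(equalizer.lift _ keyS).base (IsLocalRing.closedPoint _), ?_⟩
    show (equalizer.lift _ keyS ≫ equalizer.ι f g).base _ = s
    rw [equalizer.lift_ι]
    simp
    exact Scheme.fromSpecResidueField_apply _ _
end

section
/- Let S be a scheme, X an S-scheme with structure morphism ρ : X → S, and let f, g : S → X be S-valued points of X (morphisms with ρ ∘ f = id_S and ρ ∘ g = id_S). Then f and g are strongly distinct if and only if f(s) ≠ g(s) for every point s ∈ S. -/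
open AlgebraicGeometry CategoryTheory CategoryTheory.Limits

/-- Naturality of `residueFieldCongr` with respect to `residueFieldMap`. -/
lemma residueFieldMap_congr_naturality {X S : Scheme} (ρ : X ⟶ S) {x y : X} (h : x = y) :
    (S.residueFieldCongr (by rw [h])).hom ≫ ρ.residueFieldMap y =
      ρ.residueFieldMap x ≫ (X.residueFieldCongr h).hom := by
  subst h; simp

/-- Two scheme morphisms are *strongly distinct* if their equalizer in the
category of schemes has empty underlying space (equivalently, it is the
empty scheme). -/
def StronglyDistinct {X Y : Scheme} (f g : X ⟶ Y) : Prop :=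
  IsEmpty ↥(equalizer f g)

/-- For `S`-valued points `f, g : S ⟶ X` of an `S`-scheme `X`, strong
distinctness is equivalent to `f` and `g` disagreeing at every point of `S`. -/
theorem stronglyDistinct_iff_ne_at_all_points {S X : Scheme} (ρ : X ⟶ S)
    (f g : S ⟶ X) (hf : f ≫ ρ = 𝟙 S) (hg : g ≫ ρ = 𝟙 S) :
    StronglyDistinct f g ↔ ∀ s : S, f.base s ≠ g.base s := by
  constructor
  · intro h s hs
    have e₁ : ρ.base (f.base s) = s := by
      simpa using congrArg (fun φ : S ⟶ S => φ.base s) hf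
    have e₂ : ρ.base (g.base s) = s := by
      simpa using congrArg (fun φ : S ⟶ S => φ.base s) hg
    have A : ρ.residueFieldMap (f.base s) ≫ f.residueFieldMap s
        = (S.residueFieldCongr e₁).hom := by
      have h1 := Scheme.Hom.residueFieldMap_congr hf s
      rw [Scheme.residueFieldMap_comp] at h1
      simpa using h1
    have B : ρ.residueFieldMap (g.base s) ≫ g.residueFieldMap s
        = (S.residueFieldCongr e₂).hom := by
      have h1 := Scheme.Hom.residueFieldMap_congr hg s
      rw [Scheme.residueFieldMap_comp] at h1
      simpa using h1
    have hinj : Function.Injective (f.residueFieldMap s) := RingHom.injective _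
    have hmono : Mono (f.residueFieldMap s) := ConcreteCategory.mono_of_injective _ hinj
    have hsplit : IsSplitEpi (f.residueFieldMap s) :=
      IsSplitEpi.mk' ⟨(S.residueFieldCongr e₁).inv ≫ ρ.residueFieldMap (f.base s), by
        rw [Category.assoc, A]; simp⟩
    have hiso : IsIso (f.residueFieldMap s) := isIso_of_mono_of_isSplitEpi _
    have hrho : Epi (ρ.residueFieldMap (f.base s)) := by
      have : ρ.residueFieldMap (f.base s) =
          (S.residueFieldCongr e₁).hom ≫ inv (f.residueFieldMap s) := by
        rw [← A]; simp
      rw [this]; exact epi_comp _ _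
    have C : ρ.residueFieldMap (f.base s) ≫ (X.residueFieldCongr hs).hom ≫ g.residueFieldMap s
        = (S.residueFieldCongr e₁).hom := by
      rw [← Category.assoc, ← residueFieldMap_congr_naturality ρ hs, Category.assoc, B,
        Scheme.residueFieldCongr_trans_hom]
    have fg : f.residueFieldMap s =
        (X.residueFieldCongr hs).hom ≫ g.residueFieldMap s := by
      rw [← cancel_epi (ρ.residueFieldMap (f.base s)), A, C]
    have key : S.fromSpecResidueField s ≫ f = S.fromSpecResidueField s ≫ g := by
      rw [← Scheme.Hom.SpecMap_residueFieldMap_fromSpecResidueField f s,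
        ← Scheme.Hom.SpecMap_residueFieldMap_fromSpecResidueField g s, fg,
        Spec.map_comp, Category.assoc, Scheme.residueFieldCongr_fromSpecResidueField]
    have φ := equalizer.lift _ key
    exact h.false (φ.base (Nonempty.some inferInstance))
  · intro H
    refine ⟨fun t => ?_⟩
    have h1 := congrArg (fun φ : equalizer f g ⟶ X => φ.base t) (equalizer.condition f g)
    exact H _ (by simpa using h1)
end

section
/- Let R be a Dedekind domain that is not a field, with fraction field K, and fix an integer n ≥ 1. Let A be an n × n matrix with entries in K whose determinant det(A) is nonzero. Then the following are equivalent: (1) for every nonzero prime ideal 𝔭 of R (every height one prime), n divides ord_𝔭(det(A)), and for all indices i, j with A_{i,j} ≠ 0 one has n · ord_𝔭(A_{i,j}) ≥ ord_𝔭(det(A)); (2) there exists a nonzero fractional ideal I of R in K such that every entry A_{i,j} lies in I and the fractional ideal generated by det(A) equals I^n, i.e., span_R{det(A)} = I^n. -/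
open IsDedekindDomain
open scoped Classical

/-- The normalized additive `𝔭`-adic valuation `ord_𝔭` on the fraction field
of a Dedekind domain: `ord v x` is the exponent of `v` in the factorization
of the fractional ideal `xR` (and `0` by convention when `x = 0`). -/
noncomputable def ord {R : Type*} [CommRing R] [IsDomain R] [IsDedekindDomain R]
    {K : Type*} [Field K] [Algebra R K] [IsFractionRing R K]
    (v : HeightOneSpectrum R) (x : K) : ℤ :=
  if h : x = 0 then 0
  else -Multiplicative.toAdd
    (WithZero.unzero ((Valuation.ne_zero_iff (v.valuation K)).mpr h))

section Aux

open FractionalIdeal IsDedekindDomain.HeightOneSpectrum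
open scoped nonZeroDivisors

variable {R : Type*} [CommRing R] [IsDomain R] [IsDedekindDomain R]
    {K : Type*} [Field K] [Algebra R K] [IsFractionRing R K]

/-- `ord v x` agrees with the multiplicity of `v` in the factorization of the
fractional ideal generated by `x`. -/
lemma ord_eq_count (v : HeightOneSpectrum R) {x : K} (hx : x ≠ 0) :
    ord v x = FractionalIdeal.count K v (spanSingleton R⁰ x) := by
  obtain ⟨⟨m, d⟩, hnd⟩ := IsLocalization.mk'_surjective R⁰ x
  dsimp only at hnd
  have hd0 : (d : R) ≠ 0 := nonZeroDivisors.coe_ne_zero d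
  have hm0 : m ≠ 0 := by
    rintro rfl
    rw [IsLocalization.mk'_zero] at hnd
    exact hx hnd.symm
  set cm : ℤ :=
    ((Associates.mk v.asIdeal).count (Associates.mk (Ideal.span {m} : Ideal R)).factors : ℤ)
  set cd : ℤ :=
    ((Associates.mk v.asIdeal).count
      (Associates.mk (Ideal.span {(d : R)} : Ideal R)).factors : ℤ)
  have hval : v.valuation K x = ((Multiplicative.ofAdd (cd - cm) : Multiplicative ℤ) : WithZero (Multiplicative ℤ)) := by
    rw [← hnd, valuation_of_mk', v.intValuation_if_neg hm0, v.intValuation_if_neg hd0,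
      ← WithZero.exp_sub]
    show WithZero.exp _ = WithZero.exp _
    congr 1
    ring
  have hordx : ord v x = cm - cd := by
    rw [ord, dif_neg hx]
    have hu : WithZero.unzero ((Valuation.ne_zero_iff (v.valuation K)).mpr hx)
        = Multiplicative.ofAdd (cd - cm) :=
      WithZero.coe_inj.mp ((WithZero.coe_unzero _).trans hval)
    rw [hu]
    simp
  have hspan : spanSingleton R⁰ x
      = spanSingleton R⁰ ((algebraMap R K) (d : R))⁻¹ * ↑(Ideal.span {m} : Ideal R) := by
    rw [coeIdeal_span_singleton, spanSingleton_mul_spanSingleton, ← hnd,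
      IsFractionRing.mk'_eq_div, div_eq_mul_inv, mul_comm]
  have hx' : spanSingleton R⁰ x ≠ 0 := spanSingleton_ne_zero_iff.mpr hx
  rw [count_well_defined K v hx' hspan, hordx]

/-- A nonzero fractional ideal whose multiplicities are all nonnegative is integral. -/
lemma le_one_of_count_nonneg {F : FractionalIdeal R⁰ K} (hF : F ≠ 0)
    (h : ∀ v : HeightOneSpectrum R, 0 ≤ FractionalIdeal.count K v F) : F ≤ 1 := by
  have hfin : {v : HeightOneSpectrum R | FractionalIdeal.count K v F ≠ 0}.Finite :=
    Filter.eventually_cofinite.mp (FractionalIdeal.finite_factors F)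
  have hsupp : (Function.mulSupport fun v : HeightOneSpectrum R =>
      (v.asIdeal : FractionalIdeal R⁰ K) ^ (FractionalIdeal.count K v F)).Finite := by
    apply hfin.subset
    intro v hv
    simp only [Set.mem_setOf_eq]
    exact fun h0 => hv (by simp [h0])
  rw [← FractionalIdeal.finprod_heightOneSpectrum_factorization' (K := K) hF,
    finprod_eq_prod _ hsupp]
  refine Finset.prod_induction _ (fun I => I ≤ 1) ?_ le_rfl ?_
  · intro a b ha hb
    calc a * b ≤ a * 1 := mul_le_mul_right hb a
      _ = a := mul_one a
      _ ≤ 1 := ha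
  · intro v _
    have hc : FractionalIdeal.count K v F = ((FractionalIdeal.count K v F).toNat : ℤ) :=
      (Int.toNat_of_nonneg (h v)).symm
    rw [hc, zpow_natCast, ← FractionalIdeal.coeIdeal_pow]
    exact FractionalIdeal.coeIdeal_le_one

/-- Comparison of multiplicities at all height one primes implies inclusion of
fractional ideals. -/
lemma le_of_count_le {F G : FractionalIdeal R⁰ K} (hF : F ≠ 0) (hG : G ≠ 0)
    (h : ∀ v : HeightOneSpectrum R, FractionalIdeal.count K v G ≤ FractionalIdeal.count K v F) :
    F ≤ G := by
  have h1 : F * G⁻¹ ≤ 1 := by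
    apply le_one_of_count_nonneg (mul_ne_zero hF (inv_ne_zero hG))
    intro v
    rw [FractionalIdeal.count_mul K v hF (inv_ne_zero hG), FractionalIdeal.count_inv]
    linarith [h v]
  calc F = G * (F * G⁻¹) := by
        rw [mul_comm F, ← mul_assoc, mul_inv_cancel₀ hG, one_mul]
    _ ≤ G * 1 := mul_le_mul_right h1 G
    _ = G := mul_one G

end Aux

/-- Let `R` be a Dedekind domain which is not a field, with fraction field
`K`, and let `A` be an `n × n` matrix over `K` with nonzero determinant.
Then `n ∣ ord_𝔭(det A)` and `n · ord_𝔭(A i j) ≥ ord_𝔭(det A)` (for all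
nonzero entries `A i j`) hold at every height one prime `𝔭` if and only if
there is a nonzero fractional ideal `I` of `R` containing all entries of `A`
such that the fractional ideal generated by `det A` equals `I ^ n`. -/
theorem matrix_ord_conditions_iff_fractionalIdeal
    {R : Type*} [CommRing R] [IsDomain R] [IsDedekindDomain R]
    (hR : ¬ IsField R)
    {K : Type*} [Field K] [Algebra R K] [IsFractionRing R K]
    {n : ℕ} (hn : 1 ≤ n) (A : Matrix (Fin n) (Fin n) K) (hA : A.det ≠ 0) :
    (∀ v : HeightOneSpectrum R,
        (n : ℤ) ∣ ord v A.det ∧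
        ∀ i j, A i j ≠ 0 → (n : ℤ) * ord v (A i j) ≥ ord v A.det) ↔
    (∃ I : FractionalIdeal (nonZeroDivisors R) K, I ≠ 0 ∧
        (∀ i j, A i j ∈ I) ∧
        FractionalIdeal.spanSingleton (nonZeroDivisors R) A.det = I ^ n) := by
  have hn0 : (0 : ℤ) < (n : ℤ) := by exact_mod_cast hn
  set D := FractionalIdeal.spanSingleton (nonZeroDivisors R) A.det with hDdef
  have hD : D ≠ 0 := FractionalIdeal.spanSingleton_ne_zero_iff.mpr hA
  constructor
  · intro h
    set e : HeightOneSpectrum R → ℤ := fun v => FractionalIdeal.count K v D / n with he_def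
    have he : ∀ v : HeightOneSpectrum R, (n : ℤ) * e v = FractionalIdeal.count K v D := by
      intro v
      apply Int.mul_ediv_cancel'
      have := (h v).1
      rwa [ord_eq_count v hA] at this
    have he_fin : ∀ᶠ v : HeightOneSpectrum R in Filter.cofinite, e v = 0 := by
      filter_upwards [FractionalIdeal.finite_factors D] with v hv
      simp [he_def, hv]
    set I : FractionalIdeal (nonZeroDivisors R) K :=
      ∏ᶠ v : HeightOneSpectrum R, (v.asIdeal : FractionalIdeal (nonZeroDivisors R) K) ^ e v
      with hI_def
    have hIcount : ∀ v : HeightOneSpectrum R, FractionalIdeal.count K v I = e v :=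
      fun v => FractionalIdeal.count_finprod K v e he_fin
    have hsupp : (Function.mulSupport fun v : HeightOneSpectrum R =>
        (v.asIdeal : FractionalIdeal (nonZeroDivisors R) K) ^ e v).Finite := by
      apply (Filter.eventually_cofinite.mp he_fin).subset
      intro v hv
      simp only [Set.mem_setOf_eq]
      exact fun h0 => hv (by simp [h0])
    have hI0 : I ≠ 0 := by
      rw [hI_def, finprod_eq_prod _ hsupp]
      exact Finset.prod_ne_zero_iff.mpr fun v _ =>
        zpow_ne_zero _ (FractionalIdeal.coeIdeal_ne_zero.mpr v.ne_bot)
    have hpow : D = I ^ n := by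
      rw [← FractionalIdeal.finprod_heightOneSpectrum_factorization' (K := K) (pow_ne_zero n hI0),
        ← FractionalIdeal.finprod_heightOneSpectrum_factorization' (K := K) hD]
      apply finprod_congr
      intro v
      rw [FractionalIdeal.count_pow, hIcount, he]
    refine ⟨I, hI0, ?_, hpow⟩
    intro i j
    rw [← FractionalIdeal.spanSingleton_le_iff_mem]
    by_cases hij : A i j = 0
    · rw [hij, FractionalIdeal.spanSingleton_zero]
      exact FractionalIdeal.zero_le _
    · apply le_of_count_le (FractionalIdeal.spanSingleton_ne_zero_iff.mpr hij) hI0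
      intro v
      rw [hIcount, ← ord_eq_count v hij]
      have h2 := (h v).2 i j hij
      rw [ord_eq_count v hA, ← he v] at h2
      exact le_of_mul_le_mul_left h2 hn0
  · rintro ⟨I, hI0, hmem, hpow⟩
    intro v
    have hcountD : ord v A.det = (n : ℤ) * FractionalIdeal.count K v I := by
      rw [ord_eq_count v hA, ← hDdef, hpow, FractionalIdeal.count_pow]
    constructor
    · exact ⟨FractionalIdeal.count K v I, hcountD⟩
    · intro i j hij
      have hle : FractionalIdeal.spanSingleton (nonZeroDivisors R) (A i j) ≤ I :=
        FractionalIdeal.spanSingleton_le_iff_mem.mpr (hmem i j)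
      have := FractionalIdeal.count_mono K v
        (FractionalIdeal.spanSingleton_ne_zero_iff.mpr hij) hle
      rw [← ord_eq_count v hij] at this
      rw [ge_iff_le, hcountD]
      exact mul_le_mul_of_nonneg_left this (le_of_lt hn0)
end

section
/- Let R be a local ring. For pairs u = (u₀, u₁) and v = (v₀, v₁) of elements of R, write Δ(u,v) = u₀v₁ − u₁v₀. Let a, b, c, d ∈ R × R be four pairs such that all six pairwise determinants Δ(a,b), Δ(a,c), Δ(a,d), Δ(b,c), Δ(b,d), Δ(c,d) are units of R, and let M be any 2 × 2 matrix over R with det(M) ∈ R^× satisfying M·a = u·(1,0), M·b = v·(0,1), M·c = w·(1,1) for some units u, v, w ∈ R^×. Then M·d = t·(z, 1) for some unit t ∈ R^×, where z = Δ(a,c)·Δ(b,d)·(Δ(a,d)·Δ(b,c))⁻¹ is the cross-ratio (a,b; c,d). -/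
open Matrix

/-- The determinant `Δ(u,v) = u₀v₁ - u₁v₀` of a pair of pairs. -/
def pairDet {R : Type*} [CommRing R] (u v : R × R) : R :=
  u.1 * v.2 - u.2 * v.1

/-- The cross-ratio `(a,b; c,d) = Δ(a,c)·Δ(b,d)·(Δ(a,d)·Δ(b,c))⁻¹` of four
pairs, where the inverse is taken via `Ring.inverse`. -/
noncomputable def crossRatio {R : Type*} [CommRing R] (a b c d : R × R) : R :=
  pairDet a c * pairDet b d * Ring.inverse (pairDet a d * pairDet b c)

/-- Over a local ring `R`, if `a, b, c, d` are four pairs with all pairwise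
determinants units, and `M` is a `2 × 2` matrix with unit determinant
sending `a, b, c` to unit multiples of `(1,0)`, `(0,1)`, `(1,1)`, then `M`
sends `d` to a unit multiple of `(z, 1)`, where `z` is the cross-ratio
`(a,b; c,d)`. -/
theorem matrix_sends_d_to_crossRatio {R : Type*} [CommRing R]
    [IsLocalRing R] (a b c d : R × R)
    (hab : IsUnit (pairDet a b)) (hac : IsUnit (pairDet a c))
    (had : IsUnit (pairDet a d)) (hbc : IsUnit (pairDet b c))
    (hbd : IsUnit (pairDet b d)) (hcd : IsUnit (pairDet c d))
    (M : Matrix (Fin 2) (Fin 2) R) (hM : IsUnit M.det)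
    (u v w : Rˣ)
    (ha : M.mulVec ![a.1, a.2] = ![(u : R), 0])
    (hb : M.mulVec ![b.1, b.2] = ![0, (v : R)])
    (hc : M.mulVec ![c.1, c.2] = ![(w : R), (w : R)]) :
    ∃ t : Rˣ, M.mulVec ![d.1, d.2] = ![(t : R) * crossRatio a b c d, (t : R)] := by

  have key : ∀ p : R × R, M.mulVec ![p.1, p.2] =
      ![M 0 0 * p.1 + M 0 1 * p.2, M 1 0 * p.1 + M 1 1 * p.2] := by
    intro p
    funext i
    fin_cases i <;>
      simp [Matrix.mulVec, dotProduct, Fin.sum_univ_two]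
  have ha0 : M 0 0 * a.1 + M 0 1 * a.2 = (u : R) := by
    have := congrFun ((key a).symm.trans ha) 0; simpa using this
  have ha1 : M 1 0 * a.1 + M 1 1 * a.2 = 0 := by
    have := congrFun ((key a).symm.trans ha) 1; simpa using this
  have hb0 : M 0 0 * b.1 + M 0 1 * b.2 = 0 := by
    have := congrFun ((key b).symm.trans hb) 0; simpa using this
  have hb1 : M 1 0 * b.1 + M 1 1 * b.2 = (v : R) := by
    have := congrFun ((key b).symm.trans hb) 1; simpa using this
  have hc0 : M 0 0 * c.1 + M 0 1 * c.2 = (w : R) := by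
    have := congrFun ((key c).symm.trans hc) 0; simpa using this
  have hc1 : M 1 0 * c.1 + M 1 1 * c.2 = (w : R) := by
    have := congrFun ((key c).symm.trans hc) 1; simpa using this
  set x0 : R := M 0 0 * d.1 + M 0 1 * d.2 with hx0
  set x1 : R := M 1 0 * d.1 + M 1 1 * d.2 with hx1
  have hdet : M.det = M 0 0 * M 1 1 - M 0 1 * M 1 0 := Matrix.det_fin_two M
  -- transformation identities
  have e1 : (u : R) * x1 = M.det * pairDet a d := by
    rw [hdet, ← ha0]
    have : (M 0 0 * a.1 + M 0 1 * a.2) * x1 - (M 1 0 * a.1 + M 1 1 * a.2) * x0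
        = (M 0 0 * M 1 1 - M 0 1 * M 1 0) * pairDet a d := by
      simp only [hx0, hx1, pairDet]; ring
    rw [ha1] at this
    linear_combination this
  have e2 : -((v : R) * x0) = M.det * pairDet b d := by
    rw [hdet]
    have : (M 0 0 * b.1 + M 0 1 * b.2) * x1 - (M 1 0 * b.1 + M 1 1 * b.2) * x0
        = (M 0 0 * M 1 1 - M 0 1 * M 1 0) * pairDet b d := by
      simp only [hx0, hx1, pairDet]; ring
    rw [hb0, hb1] at this
    linear_combination this
  have e3 : (u : R) * (w : R) = M.det * pairDet a c := by
    have : (M 0 0 * a.1 + M 0 1 * a.2) * (M 1 0 * c.1 + M 1 1 * c.2)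
        - (M 1 0 * a.1 + M 1 1 * a.2) * (M 0 0 * c.1 + M 0 1 * c.2)
        = (M 0 0 * M 1 1 - M 0 1 * M 1 0) * pairDet a c := by
      simp only [pairDet]; ring
    rw [ha0, ha1, hc0, hc1] at this
    rw [hdet]
    linear_combination this
  have e4 : -((v : R) * (w : R)) = M.det * pairDet b c := by
    have : (M 0 0 * b.1 + M 0 1 * b.2) * (M 1 0 * c.1 + M 1 1 * c.2)
        - (M 1 0 * b.1 + M 1 1 * b.2) * (M 0 0 * c.1 + M 0 1 * c.2)
        = (M 0 0 * M 1 1 - M 0 1 * M 1 0) * pairDet b c := by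
      simp only [pairDet]; ring
    rw [hb0, hb1, hc0, hc1] at this
    rw [hdet]
    linear_combination this
  -- x1 is a unit
  have hx1u : IsUnit x1 := by
    have : IsUnit ((u : R) * x1) := by
      rw [e1]; exact hM.mul had
    exact (isUnit_of_mul_isUnit_right this)
  obtain ⟨t, ht⟩ := hx1u
  -- the main algebraic identity
  have main : x0 * (pairDet a d * pairDet b c) = x1 * (pairDet a c * pairDet b d) := by
    have h2 : M.det * M.det * (x0 * (pairDet a d * pairDet b c))
        = M.det * M.det * (x1 * (pairDet a c * pairDet b d)) := by
      calc M.det * M.det * (x0 * (pairDet a d * pairDet b c))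
          = x0 * ((M.det * pairDet a d) * (M.det * pairDet b c)) := by ring
        _ = x0 * (((u : R) * x1) * (-((v : R) * (w : R)))) := by rw [e1, e4]
        _ = x1 * (((u : R) * (w : R)) * (-((v : R) * x0))) := by ring
        _ = x1 * ((M.det * pairDet a c) * (M.det * pairDet b d)) := by rw [e3, e2]
        _ = M.det * M.det * (x1 * (pairDet a c * pairDet b d)) := by ring
    exact (hM.mul hM).mul_left_cancel h2
  have hx0 : x0 = x1 * crossRatio a b c d := by
    have hu : IsUnit (pairDet a d * pairDet b c) := had.mul hbc
    unfold crossRatio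
    calc x0 = x0 * ((pairDet a d * pairDet b c) * Ring.inverse (pairDet a d * pairDet b c)) := by
          rw [Ring.mul_inverse_cancel _ hu, mul_one]
      _ = (x0 * (pairDet a d * pairDet b c)) * Ring.inverse (pairDet a d * pairDet b c) := by ring
      _ = (x1 * (pairDet a c * pairDet b d)) * Ring.inverse (pairDet a d * pairDet b c) := by
          rw [main]
      _ = x1 * (pairDet a c * pairDet b d * Ring.inverse (pairDet a d * pairDet b c)) := by ring
  refine ⟨t, ?_⟩
  rw [key d]
  funext i
  fin_cases i
  · simpa using hx0.trans (by rw [ht])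
  · simpa using ht.symm
end
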